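/- Let n ≥ 1 and 1 ≤ i ≤ j ≤ n. Then the bending flows along the nested diagonals commute: for all s, t ∈ ℝ and all g ∈ SU(2)^n, Φ_iˢ(Φ_jᵗ(g)) = Φ_jᵗ(Φ_iˢ(g)). -/

import Mathlib

open Matrix

/-- `SU2` is the special unitary group of 2×2 complex matrices,
identified with the 3-sphere `S³`. -/
abbrev SU2 : Submonoid (Matrix (Fin 2) (Fin 2) ℂ) := Matrix.specialUnitaryGroup (Fin 2) ℂ

noncomputable instance : Group SU2 :=
  { (inferInstance : Monoid SU2) with
    inv := fun A => ⟨star A.1, by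
      obtain ⟨hu, hd⟩ := Matrix.mem_specialUnitaryGroup_iff.mp A.2
      refine Matrix.mem_specialUnitaryGroup_iff.mpr ⟨Unitary.star_mem hu, ?_⟩
      rw [Matrix.star_eq_conjTranspose, Matrix.det_conjTranspose, hd, star_one]⟩
    inv_mul_cancel := fun A => Subtype.ext A.2.1.1 }

/-- `F_j(m) = (m₁⋯m_j) − (m₁⋯m_j)⁻¹`. -/
noncomputable def Fj (n j : ℕ) (m : Fin n → Matrix (Fin 2) (Fin 2) ℂ) :
    Matrix (Fin 2) (Fin 2) ℂ :=
  ((List.ofFn m).take j).prod - (((List.ofFn m).take j).prod)⁻¹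

/-- The bending flow `Φ_jᵗ`: conjugate the first `j` entries by `exp(t F_j(m))`,
leave the other entries fixed. -/
noncomputable def bendFlow (n j : ℕ) (t : ℝ) (m : Fin n → Matrix (Fin 2) (Fin 2) ℂ) :
    Fin n → Matrix (Fin 2) (Fin 2) ℂ :=
  fun k =>
    if (k : ℕ) < j then
      NormedSpace.exp (t • Fj n j m) * m k * NormedSpace.exp (-(t • Fj n j m))
    else m k

abbrev M2' := Matrix (Fin 2) (Fin 2) ℂ

lemma prod_take_succ' (n j : ℕ) (hj : j < n) (m : Fin n → M2') :
    ((List.ofFn m).take (j+1)).prod = ((List.ofFn m).take j).prod * m ⟨j, hj⟩ := by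
  rw [List.take_succ, List.prod_append]
  simp [List.getElem?_eq_getElem, hj]

lemma conj_mul' {Mo : Type*} [Monoid Mo] {B C p q : Mo} (h : C * B = 1) :
    (B * p * C) * (B * q * C) = B * (p * q) * C := by
  have haux : ∀ x, C * (B * x) = x := fun x => by rw [← mul_assoc, h, one_mul]
  simp only [mul_assoc, haux]

lemma det_prod_take' (n j : ℕ) (m : Fin n → M2') (h : ∀ k, (m k).det = 1) :
    (((List.ofFn m).take j).prod).det = 1 := by
  have hmap := map_list_prod (Matrix.detMonoidHom) ((List.ofFn m).take j)
  simp only [Matrix.coe_detMonoidHom] at hmap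
  rw [hmap]
  apply List.prod_eq_one
  intro x hx
  obtain ⟨a, ha, rfl⟩ := List.mem_map.mp hx
  obtain ⟨k, rfl⟩ := Set.mem_range.mp ((List.mem_ofFn' _ _).mp (List.mem_of_mem_take ha))
  exact h k

lemma prod_take_conj' (n : ℕ) (m m' : Fin n → M2') (B : M2') (hB : IsUnit B.det) :
    ∀ j, j ≤ n → (∀ k : Fin n, (k : ℕ) < j → m' k = B * m k * B⁻¹) →
    ((List.ofFn m').take j).prod = B * ((List.ofFn m).take j).prod * B⁻¹ := by
  intro j
  induction j with
  | zero => intro _ _; simp [Matrix.mul_nonsing_inv B hB]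
  | succ j IH =>
      intro hj h
      have hj' : j < n := hj
      rw [prod_take_succ' n j hj' m', prod_take_succ' n j hj' m,
        IH hj'.le (fun k hk => h k (Nat.lt_succ_of_lt hk)), h ⟨j, hj'⟩ (Nat.lt_succ_self j),
        conj_mul' (Matrix.nonsing_inv_mul B hB)]

lemma prod_take_eq' (n i : ℕ) (m m' : Fin n → M2')
    (h : ∀ k : Fin n, i ≤ (k : ℕ) → m' k = m k)
    (hbase : ((List.ofFn m').take i).prod = ((List.ofFn m).take i).prod) :
    ∀ j, i ≤ j → j ≤ n →
      ((List.ofFn m').take j).prod = ((List.ofFn m).take j).prod := by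
  intro j
  induction j with
  | zero => intro _ _; simp
  | succ j IH =>
      intro h1 h2
      rcases Nat.lt_or_ge j i with hji | hji
      · have : i = j + 1 := by omega
        rw [← this]; exact hbase
      · have hj' : j < n := h2
        rw [prod_take_succ' n j hj' m', prod_take_succ' n j hj' m,
          IH hji hj'.le, h ⟨j, hj'⟩ hji]

/-- exp of a matrix commuting with an invertible matrix commutes with it. -/
lemma exp_comm_of_comm {P X : M2'} (hP : IsUnit P.det) (hPX : P * X = X * P) :
    NormedSpace.exp X * P = P * NormedSpace.exp X := by
  have h1 : P * X * P⁻¹ = X := by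
    rw [hPX, Matrix.mul_nonsing_inv_cancel_right _ _ hP]
  have h2 := Matrix.exp_conj P X ((Matrix.isUnit_iff_isUnit_det _).mpr hP)
  rw [h1] at h2
  calc NormedSpace.exp X * P = P * NormedSpace.exp X * P⁻¹ * P := by rw [← h2]
    _ = P * NormedSpace.exp X := Matrix.nonsing_inv_mul_cancel_right _ _ hP

/-- Bending flows along nested diagonals commute: `Φ_iˢ ∘ Φ_jᵗ = Φ_jᵗ ∘ Φ_iˢ` for `i ≤ j`. -/
theorem bending_flows_commute (n : ℕ) (hn : 1 ≤ n) (i j : ℕ)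
    (hi : 1 ≤ i) (hij : i ≤ j) (hjn : j ≤ n) (s t : ℝ) (g : Fin n → SU2) :
    bendFlow n i s (bendFlow n j t (fun k => (g k : Matrix (Fin 2) (Fin 2) ℂ)))
      = bendFlow n j t (bendFlow n i s (fun k => (g k : Matrix (Fin 2) (Fin 2) ℂ))) := by
  have main : ∀ (m : Fin n → Matrix (Fin 2) (Fin 2) ℂ), (∀ k, (m k).det = 1) →
      bendFlow n i s (bendFlow n j t m) = bendFlow n j t (bendFlow n i s m) := by
    intro m hdet
    set PI := ((List.ofFn m).take i).prod with hPIdef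
    set PJ := ((List.ofFn m).take j).prod with hPJdef
    have hPIu : IsUnit PI.det := by
      rw [hPIdef, det_prod_take' n i m hdet]; exact isUnit_one
    have hPJu : IsUnit PJ.det := by
      rw [hPJdef, det_prod_take' n j m hdet]; exact isUnit_one
    set B := NormedSpace.exp (t • Fj n j m) with hBdef
    set A := NormedSpace.exp (s • Fj n i m) with hAdef
    have hBu : IsUnit B.det := by
      rw [hBdef]; exact (Matrix.isUnit_iff_isUnit_det _).mp (Matrix.isUnit_exp _)
    have hAu : IsUnit A.det := by
      rw [hAdef]; exact (Matrix.isUnit_iff_isUnit_det _).mp (Matrix.isUnit_exp _)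
    have hBinv : B⁻¹ * B = 1 := Matrix.nonsing_inv_mul B hBu
    have hBinv' : B * B⁻¹ = 1 := Matrix.mul_nonsing_inv B hBu
    have hAinv' : A * A⁻¹ = 1 := Matrix.mul_nonsing_inv A hAu
    have hBneg : NormedSpace.exp (-(t • Fj n j m)) = B⁻¹ := by
      rw [hBdef]; exact Matrix.exp_neg _
    have hAneg : NormedSpace.exp (-(s • Fj n i m)) = A⁻¹ := by
      rw [hAdef]; exact Matrix.exp_neg _
    have hFi : Fj n i m = PI - PI⁻¹ := by rw [hPIdef]; rfl
    have hFj : Fj n j m = PJ - PJ⁻¹ := by rw [hPJdef]; rfl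
    -- exp(s•F_i) commutes with P_i
    have hPIF : PI * Fj n i m = Fj n i m * PI := by
      rw [hFi, mul_sub, sub_mul, Matrix.mul_nonsing_inv _ hPIu,
        Matrix.nonsing_inv_mul _ hPIu]
    have hPIX : PI * (s • Fj n i m) = (s • Fj n i m) * PI := by
      rw [mul_smul_comm, smul_mul_assoc, hPIF]
    have hAPI : A * PI = PI * A := by
      rw [hAdef]; exact exp_comm_of_comm hPIu hPIX
    -- Step 1 : the first-i partial product of Φ_jᵗ m is B * P_i * B⁻¹
    have hPconj : ((List.ofFn (bendFlow n j t m)).take i).prod = B * PI * B⁻¹ := by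
      rw [hPIdef]
      apply prod_take_conj' n m _ B hBu i (hij.trans hjn)
      intro k hk
      have hkj : (k : ℕ) < j := lt_of_lt_of_le hk hij
      show (if (k : ℕ) < j then
          NormedSpace.exp (t • Fj n j m) * m k * NormedSpace.exp (-(t • Fj n j m))
        else m k) = B * m k * B⁻¹
      rw [if_pos hkj, hBneg, ← hBdef]
    have hinvBPI : (B * PI * B⁻¹)⁻¹ = B * PI⁻¹ * B⁻¹ := by
      apply Matrix.inv_eq_right_inv
      rw [conj_mul' hBinv, Matrix.mul_nonsing_inv _ hPIu, mul_one, hBinv']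
    have hFiconj : Fj n i (bendFlow n j t m) = B * Fj n i m * B⁻¹ := by
      rw [hFi]
      show ((List.ofFn (bendFlow n j t m)).take i).prod
          - (((List.ofFn (bendFlow n j t m)).take i).prod)⁻¹ = _
      rw [hPconj, hinvBPI, mul_sub, sub_mul]
    -- Step 2 : F_j is unchanged by Φ_iˢ
    have hPIeq : ((List.ofFn (bendFlow n i s m)).take i).prod = PI := by
      have h := prod_take_conj' n m (bendFlow n i s m) A hAu i (hij.trans hjn)
        (fun k hk => by
          show (if (k : ℕ) < i then
              NormedSpace.exp (s • Fj n i m) * m k * NormedSpace.exp (-(s • Fj n i m))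
            else m k) = A * m k * A⁻¹
          rw [if_pos hk, hAneg, ← hAdef])
      rw [← hPIdef] at h
      rw [h, hAPI, Matrix.mul_nonsing_inv_cancel_right _ _ hAu]
    have hPJeq : ((List.ofFn (bendFlow n i s m)).take j).prod = PJ := by
      rw [hPJdef]
      apply prod_take_eq' n i m (bendFlow n i s m)
        (fun k hk => by
          show (if (k : ℕ) < i then
              NormedSpace.exp (s • Fj n i m) * m k * NormedSpace.exp (-(s • Fj n i m))
            else m k) = m k
          rw [if_neg (not_lt.mpr hk)])
        (by rw [hPIeq, hPIdef]) j hij hjn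
    have hFjeq : Fj n j (bendFlow n i s m) = Fj n j m := by
      rw [hFj]
      show ((List.ofFn (bendFlow n i s m)).take j).prod
          - (((List.ofFn (bendFlow n i s m)).take j).prod)⁻¹ = _
      rw [hPJeq]
    -- exp of conjugated generator
    have hsmul : s • (B * Fj n i m * B⁻¹) = B * (s • Fj n i m) * B⁻¹ := by
      rw [mul_smul_comm, smul_mul_assoc]
    have hexpconj : NormedSpace.exp (s • (B * Fj n i m * B⁻¹)) = B * A * B⁻¹ := by
      rw [hsmul, Matrix.exp_conj B _ ((Matrix.isUnit_iff_isUnit_det _).mpr hBu), hAdef]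
    have hinvBA : (B * A * B⁻¹)⁻¹ = B * A⁻¹ * B⁻¹ := by
      apply Matrix.inv_eq_right_inv
      rw [conj_mul' hBinv, hAinv', mul_one, hBinv']
    have hexpnegconj :
        NormedSpace.exp (-(s • (B * Fj n i m * B⁻¹))) = B * A⁻¹ * B⁻¹ := by
      rw [Matrix.exp_neg _, hexpconj, hinvBA]
    -- pointwise unfolding of bendFlow
    have hbf : ∀ (j' : ℕ) (t' : ℝ) (M : Fin n → M2') (k : Fin n),
        bendFlow n j' t' M k = if (k : ℕ) < j' then
          NormedSpace.exp (t' • Fj n j' M) * M k * NormedSpace.exp (-(t' • Fj n j' M))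
        else M k := fun _ _ _ _ => rfl
    funext k
    simp only [hbf]
    split_ifs with h1 h2 h3
    · -- k < i and k < j
      rw [hFiconj, hFjeq, hexpconj, hexpnegconj, hBneg, ← hBdef, hAneg, ← hAdef,
        conj_mul' hBinv, conj_mul' hBinv]
    · exact absurd (lt_of_lt_of_le h1 hij) h2
    · -- i ≤ k < j
      rw [hFjeq]
    · rfl
  exact main _ (fun k => (Matrix.mem_specialUnitaryGroup_iff.mp (g k).2).2)
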